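/- Under the fixed clicking policy with block length s and clicking number T₀, the weight Υᵢ = ((1 − (B^s Z^{T₀})^i)/(1 − B^s Z^{T₀})) · (1 − η) · B^{s−T₀} · (1 − β^{T₀}) satisfies 0 ≤ Υᵢ ≤ 1 for every i ∈ ℕ; hence the opinion x(i·s) = (1 − Υᵢ)·x₀ + Υᵢ·u₀ at the start of each block is a convex combination of the innate opinion x₀ and the recommendation u₀. -/

import Mathlib

/-- Under the fixed clicking policy, the weight
`Υ i = ((1 - (B^s * Z^T₀)^i) / (1 - B^s * Z^T₀)) * (1 - η) * B^(s - T₀) * (1 - β^T₀)`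
satisfies `0 ≤ Υ i ≤ 1` for every `i`; hence the opinion at the start of each block,
`x (i*s) = (1 - Υ i) * x₀ + Υ i * u₀`, is a convex combination of `x₀` and `u₀`. -/
theorem fixed_policy_convex_combination
    (α β x₀ u₀ : ℝ) (hα : 0 < α) (hβ : 0 < β) (hαβ : α + β ≤ 1)
    (hx₀ : -1 ≤ x₀ ∧ x₀ ≤ 1) (hu₀ : -1 ≤ u₀ ∧ u₀ ≤ 1)
    (s T₀ : ℕ) (hs : 1 ≤ s) (hT₀ : T₀ ≤ s)
    (clk : ℕ → ℕ) (hclk : ∀ k, clk k = if k % s < T₀ then 1 else 0)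
    (x : ℕ → ℝ) (hx0 : x 0 = x₀)
    (hdyn : ∀ k, x (k + 1) =
      if clk k = 1 then α * x₀ + β * x k + (1 - α - β) * u₀
      else α / (α + β) * x₀ + β / (α + β) * x k)
    (Υ : ℕ → ℝ)
    (hΥ : ∀ i, Υ i =
      (1 - ((β / (α + β)) ^ s * (α + β) ^ T₀) ^ i) /
        (1 - (β / (α + β)) ^ s * (α + β) ^ T₀) *
        (1 - α / (1 - β)) * (β / (α + β)) ^ (s - T₀) * (1 - β ^ T₀)) :
    ∀ i : ℕ, 0 ≤ Υ i ∧ Υ i ≤ 1 ∧ x (i * s) = (1 - Υ i) * x₀ + Υ i * u₀ := by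
  have hβ1 : β < 1 := by linarith
  have hZ0 : (0:ℝ) < α + β := by linarith
  have h1β : (0:ℝ) < 1 - β := by linarith
  set Z : ℝ := α + β with hZdef
  set B : ℝ := β / Z with hBdef
  set η : ℝ := α / (1 - β) with hηdef
  have hB0 : 0 < B := div_pos hβ hZ0
  have hB1 : B < 1 := (div_lt_one hZ0).2 (by linarith)
  have hsum : α / Z + B = 1 := by
    rw [hBdef, ← add_div, div_self (ne_of_gt hZ0)]
  have hβBZ : β = B * Z := by
    rw [hBdef]; field_simp
  have hη0 : 0 ≤ η := div_nonneg hα.le h1β.le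
  have hη1 : η ≤ 1 := by rw [hηdef, div_le_one h1β]; linarith
  set p : ℝ := η * x₀ + (1 - η) * u₀ with hpdef
  have hη2 : (1 - β) * η = α := by
    rw [hηdef]; field_simp
  have hp : (1 - β) * p = α * x₀ + (1 - α - β) * u₀ := by
    rw [hpdef]; linear_combination (x₀ - u₀) * hη2
  set m : ℕ := s - T₀ with hmdef
  have hms : T₀ + m = s := by omega
  set q : ℝ := B ^ s * Z ^ T₀ with hqdef
  have hq0 : 0 < q := mul_pos (pow_pos hB0 s) (pow_pos hZ0 T₀)
  have hZ1 : Z ≤ 1 := hαβ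
  have hq1 : q < 1 := by
    calc q ≤ B ^ s * 1 := by
          exact mul_le_mul_of_nonneg_left (pow_le_one₀ hZ0.le hZ1) (pow_nonneg hB0.le s)
      _ = B ^ s := mul_one _
      _ < 1 := pow_lt_one₀ hB0.le hB1 (by omega)
  have hq1' : (0:ℝ) < 1 - q := by linarith
  have hkey : B ^ m * β ^ T₀ = q := by
    rw [hβBZ, mul_pow, ← mul_assoc, ← pow_add, hqdef,
      show m + T₀ = s from by omega]
  set c : ℝ := (1 - η) * B ^ m * (1 - β ^ T₀) with hcdef
  have hβT1 : β ^ T₀ ≤ 1 := pow_le_one₀ hβ.le hβ1.le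
  have hBm1 : B ^ m ≤ 1 := pow_le_one₀ hB0.le hB1.le
  have hBm0 : 0 ≤ B ^ m := pow_nonneg hB0.le m
  have hc0 : 0 ≤ c :=
    mul_nonneg (mul_nonneg (by linarith) hBm0) (by linarith)
  have hcq : c ≤ 1 - q := by
    have h1 : c ≤ B ^ m * (1 - β ^ T₀) := by
      rw [hcdef]
      nlinarith [mul_nonneg (mul_nonneg hη0 hBm0) (sub_nonneg.2 hβT1)]
    have h2 : B ^ m * (1 - β ^ T₀) = B ^ m - q := by rw [← hkey]; ring
    linarith
  have hΥ' : ∀ i, Υ i = (1 - q ^ i) / (1 - q) * c := by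
    intro i; rw [hΥ i, hcdef]; ring
  have hΥ0 : ∀ i, 0 ≤ Υ i := by
    intro i; rw [hΥ' i]
    have : q ^ i ≤ 1 := pow_le_one₀ hq0.le hq1.le
    exact mul_nonneg (div_nonneg (by linarith) hq1'.le) hc0
  have hΥ1 : ∀ i, Υ i ≤ 1 := by
    intro i; rw [hΥ' i, div_mul_eq_mul_div, div_le_one hq1']
    have h1 : (0:ℝ) ≤ q ^ i := pow_nonneg hq0.le i
    nlinarith
  have hclk1 : ∀ k, k % s < T₀ →
      x (k + 1) = α * x₀ + β * x k + (1 - α - β) * u₀ := by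
    intro k hk
    rw [hdyn k, hclk k, if_pos hk, if_pos rfl]
  have hclk0 : ∀ k, ¬ (k % s < T₀) →
      x (k + 1) = α / Z * x₀ + B * x k := by
    intro k hk
    rw [hdyn k, hclk k, if_neg hk, if_neg (by norm_num)]
  have blockA : ∀ n j, j ≤ T₀ →
      x (n * s + j) = β ^ j * x (n * s) + (1 - β ^ j) * p := by
    intro n j
    induction j with
    | zero => intro _; simp
    | succ j ih =>
      intro hj
      have hmod : (n * s + j) % s = j := by
        rw [Nat.mul_comm, Nat.mul_add_mod, Nat.mod_eq_of_lt (by omega)]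
      have hstep := hclk1 (n * s + j) (by rw [hmod]; omega)
      rw [show n * s + (j + 1) = (n * s + j) + 1 from rfl, hstep, ih (by omega)]
      linear_combination -(1 - β ^ j) * hp + (1 - β ^ j) * hp - hp
  have blockB : ∀ n j, j ≤ m →
      x (n * s + T₀ + j) = B ^ j * x (n * s + T₀) + (1 - B ^ j) * x₀ := by
    intro n j
    induction j with
    | zero => intro _; simp
    | succ j ih =>
      intro hj
      have hmod : (n * s + (T₀ + j)) % s = T₀ + j := by
        rw [Nat.mul_comm, Nat.mul_add_mod, Nat.mod_eq_of_lt (by omega)]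
      have hstep := hclk0 (n * s + T₀ + j) (by
        rw [Nat.add_assoc, hmod]; omega)
      rw [show n * s + T₀ + (j + 1) = (n * s + T₀ + j) + 1 from rfl, hstep,
        ih (by omega)]
      linear_combination x₀ * hsum
  have hΥrec : ∀ i, Υ (i + 1) = q * Υ i + c := by
    intro i
    rw [hΥ' (i + 1), hΥ' i]
    field_simp
    ring
  have hmain : ∀ i, x (i * s) = (1 - Υ i) * x₀ + Υ i * u₀ := by
    intro i
    induction i with
    | zero => simp [hΥ' 0, hx0]
    | succ i ih =>
      have hA := blockA i T₀ le_rfl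
      have hB2 := blockB i m le_rfl
      have hidx : i * s + T₀ + m = (i + 1) * s := by
        rw [Nat.add_assoc, hms, Nat.succ_mul]
      rw [hidx] at hB2
      rw [hB2, hA, ih, hΥrec i, hpdef, hcdef]
      linear_combination (Υ i * (u₀ - x₀)) * hkey
  exact fun i => ⟨hΥ0 i, hΥ1 i, hmain i⟩
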